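/- arXiv:2504.01543 — 6 statements merged into one kernel-verified Lean document; each statement's English description precedes it below -/
import Mathlib

section
/- Let n ≥ 1, x ∈ {0,1}^{n−1}, and 0 < β < α ≤ 1. Consider the Knapsack instance I(x) on n items with capacity K = 1, where item i has (profit, weight) = (x_i, 1) for 1 ≤ i ≤ n−1 and item n has (profit, weight) = (β, 1). Then the singleton {n} is a feasible solution with p({n}) ≥ α·OPT(I(x)) if and only if x_i = 0 for all i; moreover, when x_i = 0 for all i, {n} is the unique feasible solution attaining profit at least α·OPT(I(x)). -/
/-- The optimal value of a Knapsack instance with items indexed by `ι`,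
profits `p`, weights `w`, and capacity `K`. -/
noncomputable def KOPT {ι : Type*} [Fintype ι] (p w : ι → ℝ) (K : ℝ) : ℝ :=
  sSup {v : ℝ | ∃ S : Finset ι, ∑ i ∈ S, w i ≤ K ∧ ∑ i ∈ S, p i = v}

/-- The last item of an instance on `n ≥ 1` items. -/
def lastIdx (n : ℕ) (hn : 1 ≤ n) : Fin n := ⟨n - 1, by omega⟩

theorem stmt1 (n : ℕ) (hn : 1 ≤ n) (x : Fin (n - 1) → Bool) (α β : ℝ)
    (hβ0 : 0 < β) (hβα : β < α) (hα1 : α ≤ 1)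
    (p w : Fin n → ℝ)
    (hp : ∀ (i : ℕ) (h : i < n - 1), p ⟨i, by omega⟩ = if x ⟨i, h⟩ then (1 : ℝ) else 0)
    (hplast : p (lastIdx n hn) = β)
    (hw : ∀ i, w i = 1) :
    -- the singleton {n} is a feasible α-approximate solution iff all x_i = 0
    ((∑ i ∈ ({lastIdx n hn} : Finset (Fin n)), w i ≤ 1 ∧
        α * KOPT p w 1 ≤ ∑ i ∈ ({lastIdx n hn} : Finset (Fin n)), p i) ↔ ∀ i, x i = false) ∧
    -- when all x_i = 0, it is the unique feasible solution of profit at least α·OPT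
    ((∀ i, x i = false) → ∀ S : Finset (Fin n),
        ∑ i ∈ S, w i ≤ 1 → α * KOPT p w 1 ≤ ∑ i ∈ S, p i → S = {lastIdx n hn}) := by
  haveI : Nonempty (Fin n) := ⟨lastIdx n hn⟩
  have hβ1 : β < 1 := lt_of_lt_of_le hβα hα1
  have hα0 : 0 < α := lt_trans hβ0 hβα
  -- characterize p
  have hpi : ∀ (i : Fin n) (h : i.val < n - 1), p i = if x ⟨i.val, h⟩ then (1 : ℝ) else 0 := by
    intro i h
    have := hp i.val h
    convert this using 2
  have hlast : ∀ (i : Fin n), ¬ i.val < n - 1 → i = lastIdx n hn := by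
    intro i h
    apply Fin.ext
    simp only [lastIdx]
    omega
  have hple : ∀ i : Fin n, p i ≤ 1 := by
    intro i
    rcases lt_or_ge i.val (n - 1) with h | h
    · rw [hpi i h]; split <;> norm_num
    · rw [hlast i (not_lt.mpr h), hplast]; linarith
  -- feasible sets have card ≤ 1
  have hcard : ∀ S : Finset (Fin n), ∑ i ∈ S, w i ≤ 1 → S.card ≤ 1 := by
    intro S hS
    have h1 : ∑ i ∈ S, w i = (S.card : ℝ) := by
      simp [hw]
    rw [h1] at hS
    exact_mod_cast hS
  set V := {v : ℝ | ∃ S : Finset (Fin n), ∑ i ∈ S, w i ≤ 1 ∧ ∑ i ∈ S, p i = v} with hV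
  have hub1 : ∀ v ∈ V, v ≤ 1 := by
    rintro v ⟨S, hS, rfl⟩
    rcases Finset.card_le_one_iff_subset_singleton.mp (hcard S hS) with ⟨a, ha⟩
    rcases Finset.subset_singleton_iff.mp ha with rfl | rfl
    · simp
    · simpa using hple a
  have hbdd : BddAbove V := ⟨1, hub1⟩
  have hmemlast : β ∈ V := by
    refine ⟨{lastIdx n hn}, ?_, ?_⟩ <;> simp [hw, hplast]
  have hKOPT_le : KOPT p w 1 ≤ 1 := csSup_le ⟨β, hmemlast⟩ hub1
  have hsum_last : ∑ i ∈ ({lastIdx n hn} : Finset (Fin n)), p i = β := by simp [hplast]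
  constructor
  · constructor
    · rintro ⟨hfeas, happrox⟩ i
      by_contra hxi
      have hxi' : x i = true := by simpa using hxi
      -- item ⟨i.val, _⟩ : Fin n has profit 1
      have hin : (i : ℕ) < n := by omega
      have hmem1 : (1 : ℝ) ∈ V := by
        refine ⟨{⟨i.val, hin⟩}, by simp [hw], ?_⟩
        rw [Finset.sum_singleton, hpi ⟨i.val, hin⟩ i.isLt]
        simp [hxi']
      have h1le : (1 : ℝ) ≤ KOPT p w 1 := le_csSup hbdd hmem1
      rw [hsum_last] at happrox
      nlinarith
    · intro hx
      refine ⟨by simp [hw], ?_⟩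
      rw [hsum_last]
      -- KOPT = β
      have hub : ∀ v ∈ V, v ≤ β := by
        rintro v ⟨S, hS, rfl⟩
        rcases Finset.card_le_one_iff_subset_singleton.mp (hcard S hS) with ⟨a, ha⟩
        rcases Finset.subset_singleton_iff.mp ha with rfl | rfl
        · simp; linarith
        · rw [Finset.sum_singleton]
          rcases lt_or_ge a.val (n - 1) with h | h
          · rw [hpi a h, hx]; simp; linarith
          · rw [hlast a (not_lt.mpr h), hplast]
      have : KOPT p w 1 = β := le_antisymm (csSup_le ⟨β, hmemlast⟩ hub)
        (le_csSup hbdd hmemlast)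
      rw [this]
      nlinarith
  · intro hx S hfeas happrox
    have hub : ∀ v ∈ V, v ≤ β := by
      rintro v ⟨S, hS, rfl⟩
      rcases Finset.card_le_one_iff_subset_singleton.mp (hcard S hS) with ⟨a, ha⟩
      rcases Finset.subset_singleton_iff.mp ha with rfl | rfl
      · simp; linarith
      · rw [Finset.sum_singleton]
        rcases lt_or_ge a.val (n - 1) with h | h
        · rw [hpi a h, hx]; simp; linarith
        · rw [hlast a (not_lt.mpr h), hplast]
    have hK : KOPT p w 1 = β := le_antisymm (csSup_le ⟨β, hmemlast⟩ hub)
      (le_csSup hbdd hmemlast)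
    rw [hK] at happrox
    have hpos : 0 < α * β := mul_pos hα0 hβ0
    rcases Finset.card_le_one_iff_subset_singleton.mp (hcard S hfeas) with ⟨a, ha⟩
    rcases Finset.subset_singleton_iff.mp ha with rfl | rfl
    · simp at happrox; nlinarith
    · rw [Finset.sum_singleton] at happrox
      rcases lt_or_ge a.val (n - 1) with h | h
      · rw [hpi a h, hx] at happrox; simp at happrox; nlinarith
      · rw [hlast a (not_lt.mpr h)]
end

section
/- Let D be a probability distribution on a finite set X, let δ ∈ (0,1], and let B = {x ∈ X : D(x) ≥ δ}. If X_1, …, X_m are drawn independently from D with m ≥ ⌈6·δ^{-1}·(ln(1/δ) + 1)⌉, then with probability at least 5/6 every element of B appears at least once among X_1, …, X_m. -/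
open MeasureTheory

lemma key_real (δ : ℝ) (hδ0 : 0 < δ) (hδ1 : δ ≤ 1) (c : ℝ) (hc : 0 ≤ c)
    (hcδ : c * δ ≤ 1) (m : ℕ) (hm : 6 * δ⁻¹ * (Real.log δ⁻¹ + 1) ≤ m) :
    c * (1 - δ)^m ≤ 1/6 := by
  have hL : 0 ≤ Real.log δ⁻¹ := Real.log_nonneg (one_le_inv_iff₀.mpr ⟨hδ0, hδ1⟩)
  have hlog6 : Real.log 6 ≤ 5 := by
    have := Real.log_le_sub_one_of_pos (by norm_num : (0:ℝ) < 6)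
    linarith
  have hδm : Real.log δ⁻¹ + Real.log 6 ≤ δ * m := by
    have h1 : 6 * (Real.log δ⁻¹ + 1) ≤ δ * m := by
      have := mul_le_mul_of_nonneg_left hm hδ0.le
      rw [show δ * (6 * δ⁻¹ * (Real.log δ⁻¹ + 1)) = (δ * δ⁻¹) * (6 * (Real.log δ⁻¹ + 1)) by ring,
        mul_inv_cancel₀ hδ0.ne'] at this
      linarith
    nlinarith
  have hpow : (1 - δ)^m ≤ Real.exp (-(δ * m)) := by
    calc (1 - δ)^m ≤ (Real.exp (-δ))^m := by
          apply pow_le_pow_left₀ (by linarith)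
          linarith [Real.add_one_le_exp (-δ)]
      _ = Real.exp (-(δ * m)) := by
          rw [← Real.exp_nat_mul]; ring_nf
  have hexp : Real.exp (-(δ * m)) ≤ δ / 6 := by
    rw [show δ / 6 = Real.exp (Real.log (δ / 6)) from
      (Real.exp_log (by positivity)).symm]
    apply Real.exp_le_exp.mpr
    rw [Real.log_div hδ0.ne' (by norm_num), Real.log_inv] at *
    linarith
  calc c * (1 - δ)^m ≤ c * (δ/6) :=
        mul_le_mul_of_nonneg_left (hpow.trans hexp) hc
    _ = (c * δ)/6 := by ring
    _ ≤ 1/6 := by linarith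

theorem stmt4 {X : Type*} [Fintype X] [MeasurableSpace X] [MeasurableSingletonClass X]
    (D : PMF X) (δ : ℝ) (hδ0 : 0 < δ) (hδ1 : δ ≤ 1)
    (m : ℕ) (hm : ⌈6 * δ⁻¹ * (Real.log δ⁻¹ + 1)⌉₊ ≤ m) :
    -- with probability at least 5/6 (over m i.i.d. samples from D), every element
    -- of B = {x : D(x) ≥ δ} appears at least once among the samples
    (5 / 6 : ENNReal) ≤
      (Measure.pi fun _ : Fin m => D.toMeasure)
        {f | ∀ x : X, ENNReal.ofReal δ ≤ D x → ∃ k : Fin m, f k = x} := by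
  set μ := Measure.pi fun _ : Fin m => D.toMeasure with hμ
  haveI : IsProbabilityMeasure μ := by rw [hμ]; infer_instance
  set S : Set (Fin m → X) :=
    {f | ∀ x : X, ENNReal.ofReal δ ≤ D x → ∃ k : Fin m, f k = x} with hS
  set B : Finset X := Finset.univ.filter (fun x => ENNReal.ofReal δ ≤ D x) with hB
  -- single miss probability
  have hmiss : ∀ x : X, μ {f : Fin m → X | ∀ k, f k ≠ x} = (1 - D x)^m := by
    intro x
    have h1 : {f : Fin m → X | ∀ k, f k ≠ x} = Set.pi Set.univ (fun _ => ({x}ᶜ : Set X)) := by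
      ext f; simp [Set.mem_pi]
    rw [h1, hμ, Measure.pi_pi]
    have h2 : D.toMeasure ({x}ᶜ : Set X) = 1 - D x := by
      rw [measure_compl (measurableSet_singleton x) (measure_ne_top _ _),
        measure_univ, PMF.toMeasure_apply_singleton _ _ (measurableSet_singleton x)]
    simp [h2]
  -- cardinality bound
  have hcard : (B.card : ENNReal) * ENNReal.ofReal δ ≤ 1 := by
    calc (B.card : ENNReal) * ENNReal.ofReal δ = ∑ _x ∈ B, ENNReal.ofReal δ := by
          simp [Finset.sum_const, mul_comm]
      _ ≤ ∑ x ∈ B, D x := Finset.sum_le_sum (fun x hx => (Finset.mem_filter.mp hx).2)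
      _ ≤ ∑ x, D x := Finset.sum_le_sum_of_subset (Finset.filter_subset _ _)
      _ = 1 := by rw [← tsum_fintype (L := SummationFilter.unconditional X)]; exact D.tsum_coe
  have hcardR : (B.card : ℝ) * δ ≤ 1 := by
    have := ENNReal.toReal_mono (by norm_num) hcard
    simpa [ENNReal.toReal_mul, ENNReal.toReal_ofReal hδ0.le] using this
  -- union bound on complement
  have hSc : μ Sᶜ ≤ 1/6 := by
    have hsub : Sᶜ ⊆ ⋃ x ∈ B, {f : Fin m → X | ∀ k, f k ≠ x} := by
      intro f hf
      simp only [hS, Set.mem_compl_iff, Set.mem_setOf_eq, not_forall] at hf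
      obtain ⟨x, hx, hnx⟩ := hf
      refine Set.mem_biUnion (Finset.mem_filter.mpr ⟨Finset.mem_univ x, hx⟩) ?_
      simp only [Set.mem_setOf_eq]
      intro k hk
      exact hnx ⟨k, hk⟩
    calc μ Sᶜ ≤ ∑ x ∈ B, μ {f : Fin m → X | ∀ k, f k ≠ x} :=
          (measure_mono hsub).trans (measure_biUnion_finset_le B _)
      _ ≤ ∑ _x ∈ B, ENNReal.ofReal ((1-δ)^m) := by
          refine Finset.sum_le_sum (fun x hx => ?_)
          rw [hmiss x, ENNReal.ofReal_pow (by linarith),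
            ENNReal.ofReal_sub _ hδ0.le, ENNReal.ofReal_one]
          exact pow_le_pow_left' (tsub_le_tsub_left (Finset.mem_filter.mp hx).2 1) m
      _ = ENNReal.ofReal ((B.card : ℝ) * (1-δ)^m) := by
          rw [ENNReal.ofReal_mul (by positivity), Finset.sum_const, nsmul_eq_mul,
            ENNReal.ofReal_natCast]
      _ ≤ ENNReal.ofReal (1/6) := by
          exact ENNReal.ofReal_le_ofReal
            (key_real δ hδ0 hδ1 _ (by positivity) hcardR m ((Nat.ceil_le).mp hm))
      _ = 1/6 := by
          rw [ENNReal.ofReal_div_of_pos (by norm_num)]; norm_num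
  have h1 : (1 : ENNReal) ≤ μ S + μ Sᶜ := by
    rw [← measure_univ (μ := μ), ← Set.union_compl_self S]
    exact measure_union_le S Sᶜ
  have h2 : 1 - μ Sᶜ ≤ μ S := tsub_le_iff_right.mpr h1
  have h56 : (1 : ENNReal) - 1/6 = 5/6 :=
    ENNReal.sub_eq_of_eq_add (by norm_num) (by
      rw [ENNReal.div_add_div_same]
      norm_num
      exact (ENNReal.div_self (by norm_num) (by norm_num)).symm)
  calc (5/6 : ENNReal) = 1 - 1/6 := h56.symm
    _ ≤ 1 - μ Sᶜ := tsub_le_tsub_left hSc 1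
    _ ≤ μ S := h2
end

section
/- Let X be a linearly ordered countable set, D a probability distribution on X, p ∈ [0,1], and τ ∈ [0,1]. Let D' be the probability distribution on the set obtained from X by adjoining a new bottom element ⊥ and a new top element ⊤, defined by D'(⊥) = (1−p)/2, D'(⊤) = p/2, and D'(x) = D(x)/2 for every x ∈ X. If v ∈ X satisfies Pr_{Y∼D'}[Y ≤ v] ≥ 1/2 − τ/2 and Pr_{Y∼D'}[Y ≥ v] ≥ 1/2 − τ/2, then Pr_{Z∼D}[Z ≤ v] ≥ p − τ and Pr_{Z∼D}[Z ≥ v] ≥ 1 − p − τ; that is, v is a τ-approximate p-quantile of D. -/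
open Function Set

/-- Pushing a set forward along an injective map whose masses are halved
halves the outer measure. -/
lemma stmt5_aux_image {X Y : Type*} (D : PMF X) (D' : PMF Y) (g : X → Y)
    (hg : Function.Injective g) (hD : ∀ x, D' (g x) = D x / 2) (A : Set X) :
    D'.toOuterMeasure (g '' A) = D.toOuterMeasure A / 2 := by
  rw [PMF.toOuterMeasure_apply, PMF.toOuterMeasure_apply]
  have hsupp : Function.support ((g '' A).indicator (⇑D')) ⊆ Set.range g := by
    intro y hy
    have hmem : y ∈ g '' A := Set.mem_of_indicator_ne_zero hy
    rcases hmem with ⟨x, _, rfl⟩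
    exact ⟨x, rfl⟩
  rw [← hg.tsum_eq hsupp]
  have hpt : ∀ x : X, (g '' A).indicator (⇑D') (g x) = A.indicator (⇑D) x / 2 := by
    intro x
    by_cases hx : x ∈ A
    · rw [Set.indicator_of_mem (Set.mem_image_of_mem g hx),
        Set.indicator_of_mem hx, hD]
    · rw [Set.indicator_of_notMem (fun h => hx ((hg.mem_set_image).mp h)),
        Set.indicator_of_notMem hx, ENNReal.zero_div]
  simp only [hpt, div_eq_mul_inv, ENNReal.tsum_mul_right]

lemma stmt5_aux_le_one {X : Type*} (D : PMF X) (A : Set X) :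
    D.toOuterMeasure A ≤ 1 := by
  rw [PMF.toOuterMeasure_apply]
  calc ∑' x, A.indicator (⇑D) x ≤ ∑' x, D x :=
        ENNReal.tsum_le_tsum fun x => Set.indicator_le_self _ _ x
    _ = 1 := D.tsum_coe

/-- The final arithmetic step, stated abstractly. -/
lemma stmt5_aux_arith {a b τ : ℝ} (Q : ENNReal) (hQ1 : Q ≤ 1)
    (hb : 0 ≤ b) (hτ0 : 0 ≤ τ)
    (hab : b = (1 - a) / 2)
    (h : ENNReal.ofReal (1 / 2 - τ / 2) ≤ ENNReal.ofReal b + Q / 2) :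
    ENNReal.ofReal (a - τ) ≤ Q := by
  by_cases ha : a - τ ≤ 0
  · simpa [ENNReal.ofReal_eq_zero.mpr ha] using zero_le Q
  push_neg at ha
  have hQtop : Q ≠ ⊤ := ne_top_of_le_ne_top ENNReal.one_ne_top hQ1
  have hhalf : Q / 2 ≠ ⊤ := ne_top_of_le_ne_top hQtop ENNReal.half_le_self
  have hRtop : ENNReal.ofReal b + Q / 2 ≠ ⊤ :=
    ENNReal.add_ne_top.mpr ⟨ENNReal.ofReal_ne_top, hhalf⟩
  have h' := ENNReal.toReal_mono hRtop h
  rw [ENNReal.toReal_add ENNReal.ofReal_ne_top hhalf,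
    ENNReal.toReal_ofReal hb, ENNReal.toReal_div] at h'
  have hτhalf : (0:ℝ) ≤ 1 / 2 - τ / 2 := by
    nlinarith [ENNReal.toReal_nonneg (a := Q)]
  rw [ENNReal.toReal_ofReal hτhalf] at h'
  simp only [ENNReal.toReal_ofNat] at h'
  have hq : a - τ ≤ Q.toReal := by
    rw [hab] at h'; linarith
  calc ENNReal.ofReal (a - τ) ≤ ENNReal.ofReal Q.toReal :=
        ENNReal.ofReal_le_ofReal hq
    _ ≤ Q := ENNReal.ofReal_toReal_le

theorem stmt5 {X : Type*} [LinearOrder X] [Countable X]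
    (D : PMF X) (D' : PMF (WithBot (WithTop X)))
    (p τ : ℝ) (hp0 : 0 ≤ p) (hp1 : p ≤ 1) (hτ0 : 0 ≤ τ) (hτ1 : τ ≤ 1)
    -- D' puts mass (1-p)/2 on the new bottom element, p/2 on the new top element,
    -- and D(x)/2 on each x ∈ X
    (hbot : D' ⊥ = ENNReal.ofReal ((1 - p) / 2))
    (htop : D' ((⊤ : WithTop X) : WithBot (WithTop X)) = ENNReal.ofReal (p / 2))
    (hmid : ∀ x : X, D' (((x : WithTop X) : WithBot (WithTop X))) = D x / 2)
    (v : X)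
    -- v satisfies Pr_{Y∼D'}[Y ≤ v] ≥ 1/2 − τ/2 and Pr_{Y∼D'}[Y ≥ v] ≥ 1/2 − τ/2
    (hle : ENNReal.ofReal (1 / 2 - τ / 2) ≤
      D'.toOuterMeasure {y | y ≤ ((v : WithTop X) : WithBot (WithTop X))})
    (hge : ENNReal.ofReal (1 / 2 - τ / 2) ≤
      D'.toOuterMeasure {y | ((v : WithTop X) : WithBot (WithTop X)) ≤ y}) :
    -- then v is a τ-approximate p-quantile of D
    ENNReal.ofReal (p - τ) ≤ D.toOuterMeasure {z | z ≤ v} ∧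
    ENNReal.ofReal (1 - p - τ) ≤ D.toOuterMeasure {z | v ≤ z} := by
  set g : X → WithBot (WithTop X) := fun x => ((x : WithTop X) : WithBot (WithTop X)) with hg_def
  have hg : Function.Injective g := by
    intro a b hab
    simpa [hg_def] using hab
  have himg : ∀ A : Set X, D'.toOuterMeasure (g '' A) = D.toOuterMeasure A / 2 :=
    stmt5_aux_image D D' g hg hmid
  constructor
  · -- lower bound for Pr[Z ≤ v]
    have hsub : {y | y ≤ ((v : WithTop X) : WithBot (WithTop X))} ⊆
        {(⊥ : WithBot (WithTop X))} ∪ g '' {z | z ≤ v} := by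
      intro y hy
      induction y using WithBot.recBotCoe with
      | bot => exact Or.inl rfl
      | coe a =>
        induction a using WithTop.recTopCoe with
        | top =>
          exfalso
          have : (⊤ : WithTop X) ≤ (v : WithTop X) := WithBot.coe_le_coe.mp hy
          simp at this
        | coe x =>
          have hx : x ≤ v := by
            have := WithBot.coe_le_coe.mp hy
            exact_mod_cast this
          exact Or.inr ⟨x, hx, rfl⟩
    have hbound : D'.toOuterMeasure {y | y ≤ ((v : WithTop X) : WithBot (WithTop X))} ≤
        ENNReal.ofReal ((1 - p) / 2) + D.toOuterMeasure {z | z ≤ v} / 2 := by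
      calc D'.toOuterMeasure {y | y ≤ ((v : WithTop X) : WithBot (WithTop X))}
          ≤ D'.toOuterMeasure ({(⊥ : WithBot (WithTop X))} ∪ g '' {z | z ≤ v}) :=
            D'.toOuterMeasure.mono hsub
        _ ≤ D'.toOuterMeasure {(⊥ : WithBot (WithTop X))} +
              D'.toOuterMeasure (g '' {z | z ≤ v}) := MeasureTheory.measure_union_le _ _
        _ = ENNReal.ofReal ((1 - p) / 2) + D.toOuterMeasure {z | z ≤ v} / 2 := by
            rw [PMF.toOuterMeasure_apply_singleton, hbot, himg]
    exact stmt5_aux_arith _ (stmt5_aux_le_one D _) (by linarith) hτ0 rfl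
      (le_trans hle hbound)
  · -- lower bound for Pr[Z ≥ v]
    have hsub : {y | ((v : WithTop X) : WithBot (WithTop X)) ≤ y} ⊆
        {(((⊤ : WithTop X) : WithBot (WithTop X)))} ∪ g '' {z | v ≤ z} := by
      intro y hy
      induction y using WithBot.recBotCoe with
      | bot => exact absurd hy (by simp)
      | coe a =>
        induction a using WithTop.recTopCoe with
        | top => exact Or.inl rfl
        | coe x =>
          have hx : v ≤ x := by
            have := WithBot.coe_le_coe.mp hy
            exact_mod_cast this
          exact Or.inr ⟨x, hx, rfl⟩
    have hbound : D'.toOuterMeasure {y | ((v : WithTop X) : WithBot (WithTop X)) ≤ y} ≤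
        ENNReal.ofReal (p / 2) + D.toOuterMeasure {z | v ≤ z} / 2 := by
      calc D'.toOuterMeasure {y | ((v : WithTop X) : WithBot (WithTop X)) ≤ y}
          ≤ D'.toOuterMeasure ({(((⊤ : WithTop X) : WithBot (WithTop X)))} ∪ g '' {z | v ≤ z}) :=
            D'.toOuterMeasure.mono hsub
        _ ≤ D'.toOuterMeasure {(((⊤ : WithTop X) : WithBot (WithTop X)))} +
              D'.toOuterMeasure (g '' {z | v ≤ z}) := MeasureTheory.measure_union_le _ _
        _ = ENNReal.ofReal (p / 2) + D.toOuterMeasure {z | v ≤ z} / 2 := by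
            rw [PMF.toOuterMeasure_apply_singleton, htop, himg]
    exact stmt5_aux_arith _ (stmt5_aux_le_one D _) (by linarith) hτ0 (by ring)
      (le_trans hge hbound)
end

section
/- Let ε ∈ (0,1], let k be an integer with 1 ≤ k ≤ ⌊1/ε⌋, and let e_1 ≥ e_2 ≥ … ≥ e_k be positive real numbers. Then ⌊1/ε⌋ · ε² · Σ_{i=1}^{k} (1/e_i) ≥ (ε + ε²) · Σ_{i=1}^{k−2} (1/e_i), where the sum on the right-hand side is empty (equal to 0) when k ≤ 2. -/
theorem stmt9 (ε : ℝ) (hε0 : 0 < ε) (hε1 : ε ≤ 1)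
    (k : ℕ) (hk1 : 1 ≤ k) (hk : k ≤ ⌊1 / ε⌋₊)
    (e : ℕ → ℝ)
    (hpos : ∀ i, 1 ≤ i → i ≤ k → 0 < e i)
    (hmono : ∀ i j, 1 ≤ i → i ≤ j → j ≤ k → e j ≤ e i) :
    (ε + ε ^ 2) * ∑ i ∈ Finset.Icc 1 (k - 2), 1 / e i ≤
      (⌊1 / ε⌋₊ : ℝ) * ε ^ 2 * ∑ i ∈ Finset.Icc 1 k, 1 / e i := by
  have hsumnonneg : (0:ℝ) ≤ ∑ i ∈ Finset.Icc 1 k, 1 / e i := by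
    apply Finset.sum_nonneg
    intro i hi
    rw [Finset.mem_Icc] at hi
    have := hpos i hi.1 hi.2
    positivity
  -- floor facts
  have hεne : ε ≠ 0 := ne_of_gt hε0
  have hFle : (⌊1 / ε⌋₊ : ℝ) ≤ 1 / ε := Nat.floor_le (by positivity)
  have hFgt : 1 / ε - 1 < (⌊1 / ε⌋₊ : ℝ) := Nat.sub_one_lt_floor _
  have h1ε : (1 / ε) * ε = 1 := one_div_mul_cancel hεne
  have hF2 : ε - ε ^ 2 ≤ (⌊1 / ε⌋₊ : ℝ) * ε ^ 2 := by
    nlinarith [mul_lt_mul_of_pos_right hFgt (pow_pos hε0 2), h1ε]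
  have hkF : (k : ℝ) ≤ (⌊1 / ε⌋₊ : ℝ) := by exact_mod_cast hk
  have hεk : ε * k ≤ 1 := by
    have := mul_le_mul_of_nonneg_left hkF hε0.le
    calc ε * k ≤ ε * (⌊1 / ε⌋₊ : ℝ) := this
      _ ≤ ε * (1 / ε) := by nlinarith
      _ = 1 := by field_simp
  rcases le_or_gt k 2 with hk2 | hk3
  · have h0 : k - 2 = 0 := by omega
    rw [h0, show Finset.Icc 1 0 = (∅ : Finset ℕ) from Finset.Icc_eq_empty (by omega)]
    simp only [Finset.sum_empty, mul_zero]
    positivity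
  · obtain ⟨m, rfl⟩ : ∃ m, k = m + 3 := ⟨k - 3, by omega⟩
    have hsplit : ∑ i ∈ Finset.Icc 1 (m + 3), 1 / e i
        = (∑ i ∈ Finset.Icc 1 (m + 1), 1 / e i) + 1 / e (m + 2) + 1 / e (m + 3) := by
      rw [Finset.sum_Icc_succ_top (by omega : 1 ≤ m + 3),
        Finset.sum_Icc_succ_top (by omega : 1 ≤ m + 2)]
    have hred : m + 3 - 2 = m + 1 := by omega
    rw [hred, hsplit]
    set S := ∑ i ∈ Finset.Icc 1 (m + 1), 1 / e i with hS
    have hem1 : 0 < e (m + 1) := hpos _ (by omega) (by omega)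
    set B := 1 / e (m + 1) with hB
    have hBpos : 0 < B := by positivity
    have hSnn : 0 ≤ S := by
      apply Finset.sum_nonneg
      intro i hi
      rw [Finset.mem_Icc] at hi
      have := hpos i hi.1 (by omega)
      positivity
    have hSle : S ≤ (m + 1 : ℝ) * B := by
      calc S ≤ ∑ i ∈ Finset.Icc 1 (m + 1), B := by
              apply Finset.sum_le_sum
              intro i hi
              rw [Finset.mem_Icc] at hi
              exact one_div_le_one_div_of_le hem1
                (hmono i (m + 1) hi.1 hi.2 (by omega))
        _ = (m + 1 : ℝ) * B := by
              rw [Finset.sum_const, Nat.card_Icc]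
              push_cast
              ring_nf
    have hP : B ≤ 1 / e (m + 2) :=
      one_div_le_one_div_of_le (hpos _ (by omega) (by omega))
        (hmono (m + 1) (m + 2) (by omega) (by omega) (by omega))
    have hQ : B ≤ 1 / e (m + 3) :=
      one_div_le_one_div_of_le (hpos _ (by omega) (by omega))
        (hmono (m + 1) (m + 3) (by omega) (by omega) (by omega))
    have hεm : ε * (m + 2 : ℝ) ≤ 1 := by
      have : ε * ((m : ℝ) + 3) ≤ 1 := by push_cast at hεk ⊢; linarith
      nlinarith
    -- key: ε^2 * (m+1) ≤ ε - ε^2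
    have hkey : ε ^ 2 * ((m : ℝ) + 1) ≤ ε - ε ^ 2 := by nlinarith
    have hF0 : (0:ℝ) ≤ (⌊1 / ε⌋₊ : ℝ) * ε ^ 2 := by positivity
    nlinarith [mul_le_mul_of_nonneg_right hF2 (add_nonneg (add_nonneg hSnn (hBpos.le.trans hP)) (hBpos.le.trans hQ)),
      mul_le_mul_of_nonneg_left hSle (sq_nonneg ε),
      mul_nonneg (sub_nonneg.mpr hε1) hε0.le,
      mul_le_mul_of_nonneg_left hP (mul_nonneg hε0.le (sub_nonneg.mpr hε1)),
      mul_le_mul_of_nonneg_left hQ (mul_nonneg hε0.le (sub_nonneg.mpr hε1))]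
end

section
/- Fix ε ∈ (0,1] and let I be a Knapsack instance whose items have positive weights and total profit 1. Let e_1 ≥ e_2 ≥ … ≥ e_t be an equally partitioning sequence (EPS) with respect to I. Then for every integer k with 3 ≤ k ≤ t, the total weight of the set {(p,w) ∈ S(I) : p/w ≥ e_{k−2}} is at most (ε + ε²) · Σ_{i=1}^{k−2} (1/e_i). -/
/-- The set of small items of the instance: profit at most `ε²` and efficiency
`p/w` at least `ε²`. -/
noncomputable def smallSet {ι : Type*} [Fintype ι] (ε : ℝ) (p w : ι → ℝ) : Finset ι :=
  Finset.univ.filter (fun i => p i ≤ ε ^ 2 ∧ ε ^ 2 ≤ p i / w i)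

/-- The total profit of the bucket `A_k(I)` of small items determined by the
efficiency thresholds `e 1 ≥ e 2 ≥ … ≥ e t`. -/
noncomputable def Aprofit {ι : Type*} [Fintype ι] (ε : ℝ) (p w : ι → ℝ)
    (t : ℕ) (e : ℕ → ℝ) (k : ℕ) : ℝ :=
  if k = 0 then ∑ i ∈ (smallSet ε p w).filter (fun i => e 1 ≤ p i / w i), p i
  else if k = t then ∑ i ∈ (smallSet ε p w).filter (fun i => p i / w i < e t), p i
  else ∑ i ∈ (smallSet ε p w).filter (fun i => e (k + 1) ≤ p i / w i ∧ p i / w i < e k), p i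

/-- `e 1 ≥ e 2 ≥ … ≥ e t` is an equally partitioning sequence (EPS) w.r.t. the
instance with profits `p` and weights `w`: a non-increasing sequence of positive
reals such that each bucket `A_k(I)` (`0 ≤ k ≤ t-1`) has total profit in
`[ε, ε+ε²)` and the last bucket `A_t(I)` has total profit in `[0, ε+ε²)`. -/
def IsEPS {ι : Type*} [Fintype ι] (ε : ℝ) (p w : ι → ℝ) (t : ℕ) (e : ℕ → ℝ) : Prop :=
  1 ≤ t ∧
  (∀ k, 1 ≤ k → k ≤ t → 0 < e k) ∧
  (∀ k, 1 ≤ k → k < t → e (k + 1) ≤ e k) ∧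
  (∀ k, k < t → ε ≤ Aprofit ε p w t e k ∧ Aprofit ε p w t e k < ε + ε ^ 2) ∧
  Aprofit ε p w t e t < ε + ε ^ 2

lemma sum_w_le {ι : Type*} (p w : ι → ℝ) (hw : ∀ i, 0 < w i)
    (s : Finset ι) (c : ℝ) (hc : 0 < c) (h : ∀ i ∈ s, c ≤ p i / w i) :
    ∑ i ∈ s, w i ≤ (∑ i ∈ s, p i) / c := by
  rw [Finset.sum_div]
  refine Finset.sum_le_sum fun i hi => ?_
  have h1 := h i hi
  rw [le_div_iff₀ (hw i)] at h1
  rw [le_div_iff₀ hc]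
  linarith

theorem stmt10 {ι : Type*} [Fintype ι] (ε : ℝ) (hε0 : 0 < ε) (hε1 : ε ≤ 1)
    (p w : ι → ℝ) (hp : ∀ i, 0 ≤ p i) (hw : ∀ i, 0 < w i)
    (htot : ∑ i, p i = 1)
    (t : ℕ) (e : ℕ → ℝ) (hEPS : IsEPS ε p w t e)
    (k : ℕ) (hk3 : 3 ≤ k) (hkt : k ≤ t) :
    -- the total weight of the small items of efficiency at least e (k-2) is at most
    -- (ε + ε²) · Σ_{i=1}^{k-2} 1/e i
    ∑ i ∈ (smallSet ε p w).filter (fun i => e (k - 2) ≤ p i / w i), w i ≤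
      (ε + ε ^ 2) * ∑ j ∈ Finset.Icc 1 (k - 2), 1 / e j := by
  classical
  obtain ⟨ht1, hpos, hmono, hbuckets, hlast⟩ := hEPS
  revert hkt
  induction k, hk3 using Nat.le_induction with
  | base =>
    intro hkt
    have he1 : 0 < e 1 := hpos 1 le_rfl ht1
    have hA0 : Aprofit ε p w t e 0 < ε + ε ^ 2 := (hbuckets 0 (by omega)).2
    have hA0' : Aprofit ε p w t e 0 =
        ∑ i ∈ (smallSet ε p w).filter (fun i => e 1 ≤ p i / w i), p i := by
      simp [Aprofit]
    have key := sum_w_le p w hw ((smallSet ε p w).filter (fun i => e 1 ≤ p i / w i))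
      (e 1) he1 (fun i hi => (Finset.mem_filter.mp hi).2)
    have h32 : (3 : ℕ) - 2 = 1 := by norm_num
    rw [h32, Finset.Icc_self, Finset.sum_singleton]
    have hdiv : (∑ i ∈ (smallSet ε p w).filter (fun i => e 1 ≤ p i / w i), p i) / e 1
        ≤ (ε + ε ^ 2) / e 1 := by
      gcongr
      rw [← hA0']; exact hA0.le
    calc ∑ i ∈ (smallSet ε p w).filter (fun i => e 1 ≤ p i / w i), w i
        ≤ (∑ i ∈ (smallSet ε p w).filter (fun i => e 1 ≤ p i / w i), p i) / e 1 := key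
      _ ≤ (ε + ε ^ 2) / e 1 := hdiv
      _ = (ε + ε ^ 2) * (1 / e 1) := by ring
  | succ n hn ih =>
    intro hkt
    have hnt : n ≤ t := by omega
    have ihn := ih hnt
    have hen1 : 0 < e (n - 1) := hpos (n - 1) (by omega) (by omega)
    have hmn : e (n - 1) ≤ e (n - 2) := by
      have := hmono (n - 2) (by omega) (by omega)
      have h : n - 2 + 1 = n - 1 := by omega
      rwa [h] at this
    have hb : Aprofit ε p w t e (n - 2) < ε + ε ^ 2 := (hbuckets (n - 2) (by omega)).2
    have hb' : Aprofit ε p w t e (n - 2) =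
        ∑ i ∈ (smallSet ε p w).filter
          (fun i => e (n - 1) ≤ p i / w i ∧ p i / w i < e (n - 2)), p i := by
      have h1 : n - 2 ≠ 0 := by omega
      have h2 : n - 2 ≠ t := by omega
      have h3 : n - 2 + 1 = n - 1 := by omega
      rw [Aprofit, if_neg h1, if_neg h2, h3]
    have hsplit :
        (smallSet ε p w).filter (fun i => e (n + 1 - 2) ≤ p i / w i) =
          (smallSet ε p w).filter (fun i => e (n - 2) ≤ p i / w i) ∪
          (smallSet ε p w).filter
            (fun i => e (n - 1) ≤ p i / w i ∧ p i / w i < e (n - 2)) := by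
      have h : n + 1 - 2 = n - 1 := by omega
      rw [h]
      ext i
      simp only [Finset.mem_union, Finset.mem_filter]
      constructor
      · rintro ⟨hi, hle⟩
        rcases le_or_gt (e (n - 2)) (p i / w i) with h' | h'
        · exact Or.inl ⟨hi, h'⟩
        · exact Or.inr ⟨hi, hle, h'⟩
      · rintro (⟨hi, h'⟩ | ⟨hi, h', _⟩)
        · exact ⟨hi, le_trans hmn h'⟩
        · exact ⟨hi, h'⟩
    have hdisj : Disjoint
        ((smallSet ε p w).filter (fun i => e (n - 2) ≤ p i / w i))
        ((smallSet ε p w).filter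
          (fun i => e (n - 1) ≤ p i / w i ∧ p i / w i < e (n - 2))) := by
      rw [Finset.disjoint_left]
      intro a ha hb
      exact absurd (Finset.mem_filter.mp ha).2
        (not_le.mpr (Finset.mem_filter.mp hb).2.2)
    rw [hsplit, Finset.sum_union hdisj]
    have key := sum_w_le p w hw
      ((smallSet ε p w).filter
        (fun i => e (n - 1) ≤ p i / w i ∧ p i / w i < e (n - 2)))
      (e (n - 1)) hen1 (fun i hi => (Finset.mem_filter.mp hi).2.1)
    have hdiv : (∑ i ∈ (smallSet ε p w).filter
        (fun i => e (n - 1) ≤ p i / w i ∧ p i / w i < e (n - 2)), p i) / e (n - 1)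
        ≤ (ε + ε ^ 2) / e (n - 1) := by
      gcongr
      rw [← hb']; exact hb.le
    have hIcc : ∑ j ∈ Finset.Icc 1 (n + 1 - 2), 1 / e j
        = (∑ j ∈ Finset.Icc 1 (n - 2), 1 / e j) + 1 / e (n - 1) := by
      have h : n + 1 - 2 = (n - 2) + 1 := by omega
      have h2 : n - 2 + 1 = n - 1 := by omega
      rw [h, Finset.sum_Icc_succ_top (by omega), h2]
    rw [hIcc, mul_add]
    have h2 : ∑ i ∈ (smallSet ε p w).filter
        (fun i => e (n - 1) ≤ p i / w i ∧ p i / w i < e (n - 2)), w i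
        ≤ (ε + ε ^ 2) * (1 / e (n - 1)) := by
      calc _ ≤ _ := key
        _ ≤ (ε + ε ^ 2) / e (n - 1) := hdiv
        _ = (ε + ε ^ 2) * (1 / e (n - 1)) := by ring
    linarith
end

section
/- Fix ε ∈ (0,1] and let I = (S, K) be a Knapsack instance whose items have positive weights, total profit 1, and every item weight at most K. Let e_1 ≥ e_2 ≥ … ≥ e_t be an equally partitioning sequence (EPS) with respect to I, let Ĩ be the instance constructed from I and this EPS, and assume every item of Ĩ has weight at most K. Let C be the item set of I produced by the greedy-conversion procedure applied to Ĩ and the EPS. Then C is a feasible solution of I, i.e., the total weight of C is at most K. -/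
/-- The index set of the large items, i.e. those of profit greater than `ε²`. -/
abbrev LargeIdx {ι : Type*} (ε : ℝ) (p : ι → ℝ) : Type _ := {i : ι // ε ^ 2 < p i}

/-- The index set of the constructed instance `Ĩ`: all large items of `I`,
together with `⌊1/ε⌋` copies of a representative item for each of the `t`
efficiency buckets. -/
abbrev TildeIdx {ι : Type*} (ε : ℝ) (p : ι → ℝ) (t : ℕ) : Type _ :=
  LargeIdx ε p ⊕ (Fin t × Fin ⌊1 / ε⌋₊)

/-- Profits of the constructed instance `Ĩ`: a large item keeps its profit,
and each representative copy has profit `ε²`. -/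
noncomputable def tildeP {ι : Type*} (ε : ℝ) (p : ι → ℝ) (t : ℕ) :
    TildeIdx ε p t → ℝ :=
  Sum.elim (fun l => p l.1) (fun _ => ε ^ 2)

/-- Weights of the constructed instance `Ĩ`: a large item keeps its weight,
and each copy in bucket `k` (for `0 ≤ k ≤ t-1`) has weight `ε²/e (k+1)`. -/
noncomputable def tildeW {ι : Type*} (ε : ℝ) (p w : ι → ℝ) (t : ℕ) (e : ℕ → ℝ) :
    TildeIdx ε p t → ℝ :=
  Sum.elim (fun l => w l.1) (fun kc => ε ^ 2 / e ((kc.1 : ℕ) + 1))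

/-- Total weight (in `Ĩ`) of the first `J` items in the sorted order `σ`. -/
noncomputable def prefW {ι : Type*} [Fintype ι] (ε : ℝ) (p w : ι → ℝ) (t : ℕ) (e : ℕ → ℝ)
    {m : ℕ} (σ : Fin m → TildeIdx ε p t) (J : ℕ) : ℝ :=
  ∑ a ∈ Finset.univ.filter (fun a : Fin m => (a : ℕ) < J), tildeW ε p w t e (σ a)

/-- Total profit (in `Ĩ`) of the first `J` items in the sorted order `σ`. -/
noncomputable def prefP {ι : Type*} [Fintype ι] (ε : ℝ) (p : ι → ℝ) (t : ℕ)
    {m : ℕ} (σ : Fin m → TildeIdx ε p t) (J : ℕ) : ℝ :=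
  ∑ a ∈ Finset.univ.filter (fun a : Fin m => (a : ℕ) < J), tildeP ε p t (σ a)

private lemma eps_anti (t : ℕ) (e : ℕ → ℝ)
    (hemono : ∀ k, 1 ≤ k → k < t → e (k + 1) ≤ e k) :
    ∀ a b, 1 ≤ a → a ≤ b → b ≤ t → e b ≤ e a := by
  intro a b ha hab hbt
  induction b with
  | zero => exact absurd hab (by omega)
  | succ b ih =>
    rcases Nat.eq_or_lt_of_le hab with h | h
    · rw [← h]
    · exact (hemono b (by omega) (by omega)).trans (ih (by omega) (by omega))

open Classical in
/-- The bucket `A_j(I)` as a finset. -/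
noncomputable def Bfun {ι : Type*} [Fintype ι] (ε : ℝ) (p w : ι → ℝ) (e : ℕ → ℝ)
    (j : ℕ) : Finset ι :=
  if j = 0 then (smallSet ε p w).filter (fun i => e 1 ≤ p i / w i)
  else (smallSet ε p w).filter (fun i => e (j + 1) ≤ p i / w i ∧ p i / w i < e j)

set_option maxHeartbeats 1000000 in
theorem stmt13 {ι : Type*} [Fintype ι] (ε : ℝ) (hε0 : 0 < ε) (hε1 : ε ≤ 1)
    (p w : ι → ℝ) (K : ℝ)
    (hp : ∀ i, 0 ≤ p i) (hw : ∀ i, 0 < w i)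
    (htot : ∑ i, p i = 1) (hwK : ∀ i, w i ≤ K)
    (t : ℕ) (e : ℕ → ℝ) (hEPS : IsEPS ε p w t e)
    -- every item of Ĩ has weight at most K
    (htW : ∀ a : TildeIdx ε p t, tildeW ε p w t e a ≤ K)
    -- σ sorts the m items of Ĩ by non-increasing efficiency (arbitrary tie-breaking)
    (m : ℕ) (hm : m = Fintype.card (TildeIdx ε p t))
    (σ : Fin m → TildeIdx ε p t) (hσ : Function.Bijective σ)
    (hsort : ∀ a b : Fin m, a ≤ b →
      tildeP ε p t (σ b) / tildeW ε p w t e (σ b) ≤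
        tildeP ε p t (σ a) / tildeW ε p w t e (σ a))
    -- J is the largest index such that the first J items fit in the knapsack
    (J : ℕ) (hJ1 : 1 ≤ J) (hJm : J ≤ m)
    (hJfeas : prefW ε p w t e σ J ≤ K)
    (hJmax : J < m → K < prefW ε p w t e σ (J + 1))
    -- k is the largest index (in 1..t) with e k > (efficiency of the J-th item),
    -- and k = 0 if there is none
    (k : ℕ) (hkt : k ≤ t)
    (hkchar : ∀ l, 1 ≤ l → l ≤ t →
      (tildeP ε p t (σ ⟨J - 1, by omega⟩) / tildeW ε p w t e (σ ⟨J - 1, by omega⟩) < e l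
        ↔ l ≤ k))
    -- C is the item set of I produced by the greedy-conversion procedure:
    (C : Finset ι)
    -- first case: J = m, or the total profit of the first J items is at least
    -- the profit of the (J+1)-st item: C consists of the large items of I
    -- appearing among the first J sorted items of Ĩ, together (when k ≥ 3) with
    -- the small items of I of efficiency at least e (k-2)
    (hC1 : (J = m ∨ ∃ h : J < m, tildeP ε p t (σ ⟨J, h⟩) ≤ prefP ε p t σ J) →
      ∀ i : ι, i ∈ C ↔
        ((∃ a : Fin m, (a : ℕ) < J ∧ ∃ hi : ε ^ 2 < p i, σ a = Sum.inl ⟨i, hi⟩) ∨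
         (3 ≤ k ∧ p i ≤ ε ^ 2 ∧ ε ^ 2 ≤ p i / w i ∧ e (k - 2) ≤ p i / w i)))
    -- second case: otherwise C is the singleton consisting of the item of I
    -- equal to the (J+1)-st sorted item of Ĩ
    (hC2 : ∀ h : J < m, prefP ε p t σ J < tildeP ε p t (σ ⟨J, h⟩) →
      ∀ l : LargeIdx ε p, σ ⟨J, h⟩ = Sum.inl l → C = {l.1}) :
    -- then C is a feasible solution of I
    ∑ i ∈ C, w i ≤ K := by
  classical
  obtain ⟨ht1, hepos, hemono, hbuck, hlast⟩ := hEPS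
  have hanti := eps_anti t e hemono
  have hεsq : (0:ℝ) < ε ^ 2 := by positivity
  have htW0 : ∀ x : TildeIdx ε p t, 0 ≤ tildeW ε p w t e x := by
    rintro (l | ⟨j, c⟩)
    · exact (hw l.1).le
    · have hjt := j.isLt
      have : 0 < e ((j:ℕ) + 1) := hepos _ (by omega) (by omega)
      have : 0 < ε ^ 2 / e ((j:ℕ) + 1) := by positivity
      simpa [tildeW] using this.le
  have htPl : ∀ x : TildeIdx ε p t, ε ^ 2 ≤ tildeP ε p t x := by
    rintro (l | ⟨j, c⟩)
    · exact le_of_lt l.2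
    · simp [tildeP]
  have hm0 : 0 < m := by omega
  have hpw : prefW ε p w t e σ J
      = ∑ a ∈ Finset.univ.filter (fun a : Fin m => (a : ℕ) < J), tildeW ε p w t e (σ a) := rfl
  have hK0 : 0 ≤ K := by
    refine le_trans ?_ hJfeas
    rw [hpw]
    exact Finset.sum_nonneg fun a _ => htW0 (σ a)
  by_cases hcase : (J = m ∨ ∃ h : J < m, tildeP ε p t (σ ⟨J, h⟩) ≤ prefP ε p t σ J)
  · -- main case: greedy prefix wins
    have hC := hC1 hcase
    rcases C.eq_empty_or_nonempty with hCe | ⟨i0, hi0⟩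
    · rw [hCe]; simpa using hK0
    -- bucket machinery
    have hBlow : ∀ j i, i ∈ Bfun ε p w e j →
        (i ∈ smallSet ε p w ∧ e (j + 1) ≤ p i / w i) := by
      intro j i hi
      by_cases h0 : j = 0
      · subst h0
        rw [Bfun, if_pos rfl, Finset.mem_filter] at hi
        exact ⟨hi.1, hi.2⟩
      · rw [Bfun, if_neg h0, Finset.mem_filter] at hi
        exact ⟨hi.1, hi.2.1⟩
    have hBhigh : ∀ j, j ≠ 0 → ∀ i ∈ Bfun ε p w e j, p i / w i < e j := by
      intro j h0 i hi
      rw [Bfun, if_neg h0, Finset.mem_filter] at hi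
      exact hi.2.2
    have hBp : ∀ j, j < t → ∑ i ∈ Bfun ε p w e j, p i = Aprofit ε p w t e j := by
      intro j hj
      by_cases h0 : j = 0
      · subst h0
        rw [Bfun, if_pos rfl, Aprofit, if_pos rfl]
      · rw [Bfun, if_neg h0, Aprofit, if_neg h0, if_neg (by omega)]
    have hBdisj : ∀ j j', j < j' → j' < t →
        Disjoint (Bfun ε p w e j) (Bfun ε p w e j') := by
      intro j j' hjj hj't
      rw [Finset.disjoint_left]
      intro i hi hi'
      have h1 := (hBlow j i hi).2
      have h2 := hBhigh j' (by omega) i hi'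
      have h3 : e j' ≤ e (j + 1) := hanti (j + 1) j' (by omega) (by omega) (by omega)
      linarith
    have hPWD : ∀ N, N ≤ t →
        (↑(Finset.range N) : Set ℕ).PairwiseDisjoint (Bfun ε p w e) := by
      intro N hN a ha b hb hab
      simp only [Finset.coe_range, Set.mem_Iio] at ha hb
      rcases lt_or_gt_of_ne hab with h | h
      · exact hBdisj a b h (by omega)
      · exact (hBdisj b a h (by omega)).symm
    have hcover : ∀ N, 1 ≤ N → N ≤ t → ∀ i ∈ smallSet ε p w, e N ≤ p i / w i →
        i ∈ (Finset.range N).biUnion (Bfun ε p w e) := by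
      intro N hN1 hNt i hi hei
      rw [Finset.mem_biUnion]
      by_cases h1 : e 1 ≤ p i / w i
      · exact ⟨0, Finset.mem_range.mpr (by omega),
          by rw [Bfun, if_pos rfl, Finset.mem_filter]; exact ⟨hi, h1⟩⟩
      · have hex : ∃ l, 1 ≤ l ∧ l ≤ N ∧ e l ≤ p i / w i := ⟨N, hN1, le_refl _, hei⟩
        obtain ⟨hl1, hlN, hle⟩ := Nat.find_spec hex
        have hl2 : 2 ≤ Nat.find hex := by
          rcases Nat.lt_or_ge (Nat.find hex) 2 with h | h
          · exfalso
            have h1' : Nat.find hex = 1 := by omega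
            rw [h1'] at hle
            exact h1 hle
          · exact h
        have hprev : ¬(1 ≤ Nat.find hex - 1 ∧ Nat.find hex - 1 ≤ N ∧
            e (Nat.find hex - 1) ≤ p i / w i) := Nat.find_min hex (by omega)
        have hgt : p i / w i < e (Nat.find hex - 1) := by
          by_contra hc
          push_neg at hc
          exact hprev ⟨by omega, by omega, hc⟩
        refine ⟨Nat.find hex - 1, Finset.mem_range.mpr (by omega), ?_⟩
        rw [Bfun, if_neg (by omega), Finset.mem_filter]
        have he : Nat.find hex - 1 + 1 = Nat.find hex := by omega
        exact ⟨hi, by rw [he]; exact hle, hgt⟩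
    have htε : (t : ℝ) * ε ≤ 1 := by
      have h1 : ∑ _j ∈ Finset.range t, ε ≤ ∑ j ∈ Finset.range t, ∑ i ∈ Bfun ε p w e j, p i := by
        refine Finset.sum_le_sum fun j hj => ?_
        rw [hBp j (Finset.mem_range.mp hj)]
        exact (hbuck j (Finset.mem_range.mp hj)).1
      rw [Finset.sum_const, Finset.card_range, nsmul_eq_mul] at h1
      have h2 : ∑ j ∈ Finset.range t, ∑ i ∈ Bfun ε p w e j, p i
          = ∑ i ∈ (Finset.range t).biUnion (Bfun ε p w e), p i :=
        (Finset.sum_biUnion (hPWD t le_rfl)).symm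
      have h3 : ∑ i ∈ (Finset.range t).biUnion (Bfun ε p w e), p i ≤ ∑ i, p i :=
        Finset.sum_le_sum_of_subset_of_nonneg (Finset.subset_univ _) (fun i _ _ => hp i)
      rw [htot] at h3
      linarith
    have hkn : k ≤ ⌊1 / ε⌋₊ := by
      refine Nat.le_floor ?_
      rw [le_div_iff₀ hε0]
      calc (k : ℝ) * ε ≤ (t : ℝ) * ε :=
            mul_le_mul_of_nonneg_right (Nat.cast_le.mpr hkt) hε0.le
        _ ≤ 1 := htε
    have hnε : ε - ε ^ 2 ≤ (⌊1 / ε⌋₊ : ℝ) * ε ^ 2 := by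
      have h := Nat.sub_one_lt_floor (1 / ε)
      have h2 : (1 / ε - 1) * ε ^ 2 ≤ (⌊1 / ε⌋₊ : ℝ) * ε ^ 2 :=
        mul_le_mul_of_nonneg_right h.le hεsq.le
      have h3 : (1 / ε - 1) * ε ^ 2 = ε - ε ^ 2 := by
        field_simp
      linarith
    -- prefix sets
    set P : Finset (Fin m) := Finset.univ.filter (fun a : Fin m => (a : ℕ) < J) with hP
    set PL : Finset (Fin m) := P.filter (fun a => (σ a).isLeft) with hPL
    set PR : Finset (Fin m) := P.filter (fun a => ¬(σ a).isLeft) with hPR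
    have hsplit : ∑ a ∈ PL, tildeW ε p w t e (σ a) + ∑ a ∈ PR, tildeW ε p w t e (σ a)
        = prefW ε p w t e σ J := by
      rw [hpw]
      exact Finset.sum_filter_add_sum_filter_not P _ _
    -- key: all copies of buckets < k are in the prefix
    have hkey : ∀ (b : Fin m) (j : Fin t) (c : Fin ⌊1 / ε⌋₊),
        (j : ℕ) < k → σ b = Sum.inr (j, c) → (b : ℕ) < J := by
      intro b j c hjk hσb
      by_contra hc
      push_neg at hc
      have hle : (⟨J - 1, by omega⟩ : Fin m) ≤ b := by
        rw [Fin.le_def]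
        simp only []
        omega
      have hs := hsort ⟨J - 1, by omega⟩ b hle
      rw [hσb] at hs
      have hjt := j.isLt
      have hej : 0 < e ((j : ℕ) + 1) := hepos _ (by omega) (by omega)
      have heff : tildeP ε p t (Sum.inr (j, c) : TildeIdx ε p t)
          / tildeW ε p w t e (Sum.inr (j, c)) = e ((j : ℕ) + 1) := by
        simp only [tildeP, tildeW, Sum.elim_inr]
        rw [div_div_eq_mul_div, mul_div_cancel_left₀ _ (ne_of_gt hεsq)]
      rw [heff] at hs
      have hch := (hkchar ((j : ℕ) + 1) (by omega) (by omega)).mpr (by omega)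
      linarith
    -- the copy set
    set Scopy : Finset (TildeIdx ε p t) :=
      ((Finset.univ.filter (fun j : Fin t => (j : ℕ) < k)) ×ˢ
        (Finset.univ : Finset (Fin ⌊1 / ε⌋₊))).image Sum.inr with hScopy
    have hScopy_sum : ∑ x ∈ Scopy, tildeW ε p w t e x
        = ∑ j ∈ Finset.range k, (⌊1 / ε⌋₊ : ℝ) * (ε ^ 2 / e (j + 1)) := by
      rw [hScopy, Finset.sum_image (by intro x _ y _ h; exact Sum.inr_injective h)]
      rw [Finset.sum_product]
      simp only [tildeW, Sum.elim_inr]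
      have hstep : ∀ j ∈ Finset.univ.filter (fun j : Fin t => (j : ℕ) < k),
          ∑ _c : Fin ⌊1 / ε⌋₊, ε ^ 2 / e ((j : ℕ) + 1)
            = (⌊1 / ε⌋₊ : ℝ) * (ε ^ 2 / e ((j : ℕ) + 1)) := by
        intro j _
        rw [Finset.sum_const, Finset.card_univ, Fintype.card_fin, nsmul_eq_mul]
      rw [Finset.sum_congr rfl hstep]
      refine Finset.sum_bij' (fun (a : Fin t) _ => (a : ℕ))
        (fun b hb => (⟨b, lt_of_lt_of_le (Finset.mem_range.mp hb) hkt⟩ : Fin t))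
        ?_ ?_ ?_ ?_ ?_
      · intro a ha
        exact Finset.mem_range.mpr (Finset.mem_filter.mp ha).2
      · intro b hb
        simp only [Finset.mem_filter, Finset.mem_univ, true_and]
        exact Finset.mem_range.mp hb
      · intro a _
        rfl
      · intro b _
        rfl
      · intro a _
        rfl
    have hSle : ∑ x ∈ Scopy, tildeW ε p w t e x ≤ ∑ a ∈ PR, tildeW ε p w t e (σ a) := by
      set f : TildeIdx ε p t → Fin m := fun x => (hσ.2 x).choose with hf
      have hfσ : ∀ x, σ (f x) = x := fun x => (hσ.2 x).choose_spec
      have hinj : ∀ x ∈ Scopy, ∀ y ∈ Scopy, f x = f y → x = y := by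
        intro x _ y _ h
        rw [← hfσ x, ← hfσ y, h]
      calc ∑ x ∈ Scopy, tildeW ε p w t e x
          = ∑ x ∈ Scopy, tildeW ε p w t e (σ (f x)) :=
            Finset.sum_congr rfl (fun x _ => by rw [hfσ])
        _ = ∑ a ∈ Scopy.image f, tildeW ε p w t e (σ a) :=
            (Finset.sum_image (f := fun a => tildeW ε p w t e (σ a)) hinj).symm
        _ ≤ ∑ a ∈ PR, tildeW ε p w t e (σ a) := by
            refine Finset.sum_le_sum_of_subset_of_nonneg ?_ (fun a _ _ => htW0 _)
            intro a ha
            obtain ⟨x, hx, rfl⟩ := Finset.mem_image.mp ha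
            rw [hScopy] at hx
            obtain ⟨jc, hjc, rfl⟩ := Finset.mem_image.mp hx
            have hjk : (jc.1 : ℕ) < k :=
              (Finset.mem_filter.mp (Finset.mem_product.mp hjc).1).2
            have hfx := hfσ (Sum.inr jc)
            rw [hPR, Finset.mem_filter]
            constructor
            · rw [hP, Finset.mem_filter]
              exact ⟨Finset.mem_univ _, hkey _ jc.1 jc.2 hjk (by rw [hfx])⟩
            · rw [hfx]
              simp
    -- the small part C2
    set C2 : Finset ι := Finset.univ.filter
      (fun i => 3 ≤ k ∧ p i ≤ ε ^ 2 ∧ ε ^ 2 ≤ p i / w i ∧ e (k - 2) ≤ p i / w i) with hC2def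
    have hC2sum : ∑ i ∈ C2, w i ≤ ∑ x ∈ Scopy, tildeW ε p w t e x := by
      by_cases hk3 : 3 ≤ k
      · -- step 1: weight of C2 bounded via buckets
        have hsub : C2 ⊆ (Finset.range (k - 2)).biUnion (Bfun ε p w e) := by
          intro i hi
          rw [hC2def, Finset.mem_filter] at hi
          obtain ⟨_, _, hp2, heff2, hek2⟩ := hi
          refine hcover (k - 2) (by omega) (by omega) i ?_ hek2
          rw [smallSet, Finset.mem_filter]
          exact ⟨Finset.mem_univ _, hp2, heff2⟩
        have h1 : ∑ i ∈ C2, w i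
            ≤ ∑ j ∈ Finset.range (k - 2), ∑ i ∈ Bfun ε p w e j, w i := by
          calc ∑ i ∈ C2, w i
              ≤ ∑ i ∈ (Finset.range (k - 2)).biUnion (Bfun ε p w e), w i :=
                Finset.sum_le_sum_of_subset_of_nonneg hsub (fun i _ _ => (hw i).le)
            _ = _ := Finset.sum_biUnion (hPWD (k - 2) (by omega))
        have h2 : ∀ j ∈ Finset.range (k - 2),
            ∑ i ∈ Bfun ε p w e j, w i ≤ (ε + ε ^ 2) * (1 / e (j + 1)) := by
          intro j hj
          have hjr := Finset.mem_range.mp hj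
          have hej : 0 < e (j + 1) := hepos _ (by omega) (by omega)
          have hb : ∑ i ∈ Bfun ε p w e j, w i
              ≤ ∑ i ∈ Bfun ε p w e j, p i * (1 / e (j + 1)) := by
            refine Finset.sum_le_sum fun i hi => ?_
            have hei := (hBlow j i hi).2
            have hwi := hw i
            rw [mul_one_div, le_div_iff₀ hej]
            have := (le_div_iff₀ hwi).mp hei
            nlinarith
          have hAp : ∑ i ∈ Bfun ε p w e j, p i ≤ ε + ε ^ 2 := by
            rw [hBp j (by omega)]
            exact (hbuck j (by omega)).2.le
          have h1e : (0:ℝ) ≤ 1 / e (j + 1) := by positivity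
          calc ∑ i ∈ Bfun ε p w e j, w i
              ≤ ∑ i ∈ Bfun ε p w e j, p i * (1 / e (j + 1)) := hb
            _ = (∑ i ∈ Bfun ε p w e j, p i) * (1 / e (j + 1)) := by
                rw [Finset.sum_mul]
            _ ≤ (ε + ε ^ 2) * (1 / e (j + 1)) := mul_le_mul_of_nonneg_right hAp h1e
        have hstep1 : ∑ i ∈ C2, w i
            ≤ ∑ j ∈ Finset.range (k - 2), (ε + ε ^ 2) * (1 / e (j + 1)) :=
          h1.trans (Finset.sum_le_sum h2)
        -- step 2: the numerical inequality
        have hE2 : ∑ j ∈ Finset.range (k - 2), (ε + ε ^ 2) * (1 / e (j + 1))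
            ≤ ∑ j ∈ Finset.range k, (⌊1 / ε⌋₊ : ℝ) * (ε ^ 2 / e (j + 1)) := by
          set S := ∑ j ∈ Finset.range (k - 2), 1 / e (j + 1) with hS
          set T := ∑ j ∈ Finset.range k, 1 / e (j + 1) with hT
          have hterm : ∀ j, j < k → (0:ℝ) < 1 / e (j + 1) := by
            intro j hj
            have : 0 < e (j + 1) := hepos _ (by omega) (by omega)
            positivity
          have hu : 0 < e (k - 1) := hepos _ (by omega) (by omega)
          have hu0 : (0:ℝ) ≤ 1 / e (k - 1) := by positivity
          have hS0 : 0 ≤ S := Finset.sum_nonneg fun j hj =>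
            (hterm j (by have := Finset.mem_range.mp hj; omega)).le
          have hSu : S ≤ ((k : ℝ) - 2) * (1 / e (k - 1)) := by
            have hb : S ≤ ∑ _j ∈ Finset.range (k - 2), 1 / e (k - 1) := by
              refine Finset.sum_le_sum fun j hj => ?_
              have hj' := Finset.mem_range.mp hj
              exact one_div_le_one_div_of_le
                (hepos _ (by omega) (by omega))
                (hanti (j + 1) (k - 1) (by omega) (by omega) (by omega))
            rw [Finset.sum_const, Finset.card_range, nsmul_eq_mul] at hb
            have : ((k - 2 : ℕ) : ℝ) = (k : ℝ) - 2 := by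
              push_cast [Nat.cast_sub (by omega : 2 ≤ k)]
              ring
            rw [this] at hb
            exact hb
          have hTsplit : T = S + 1 / e (k - 1) + 1 / e k := by
            have e1 : k = (k - 2) + 1 + 1 := by omega
            rw [hT]
            conv_lhs => rw [e1]
            rw [Finset.sum_range_succ, Finset.sum_range_succ]
            rw [show k - 2 + 1 = k - 1 from by omega, show k - 1 + 1 = k from by omega]
          have h2u : 1 / e (k - 1) ≤ 1 / e k :=
            one_div_le_one_div_of_le (hepos k (by omega) hkt)
              (hanti (k - 1) k (by omega) (by omega) hkt)
          have hkfloor : ((k : ℝ)) ≤ (⌊1 / ε⌋₊ : ℝ) := Nat.cast_le.mpr hkn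
          have hL : ∑ j ∈ Finset.range (k - 2), (ε + ε ^ 2) * (1 / e (j + 1))
              = (ε + ε ^ 2) * S := (Finset.mul_sum _ _ _).symm
          have hR : ∑ j ∈ Finset.range k, (⌊1 / ε⌋₊ : ℝ) * (ε ^ 2 / e (j + 1))
              = ((⌊1 / ε⌋₊ : ℝ) * ε ^ 2) * T := by
            rw [hT, Finset.mul_sum]
            refine Finset.sum_congr rfl fun j _ => ?_
            rw [mul_one_div]
            ring
          rw [hL, hR]
          have hSnu : S ≤ (⌊1 / ε⌋₊ : ℝ) * (1 / e (k - 1)) :=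
            hSu.trans (mul_le_mul_of_nonneg_right (by linarith) hu0)
          have hA : (ε - ε ^ 2) * S ≤ ((⌊1 / ε⌋₊ : ℝ) * ε ^ 2) * S := by
            exact mul_le_mul_of_nonneg_right hnε hS0
          have hB : ε ^ 2 * S ≤ ε ^ 2 * ((⌊1 / ε⌋₊ : ℝ) * (1 / e (k - 1))) :=
            mul_le_mul_of_nonneg_left hSnu hεsq.le
          have hCC : ((⌊1 / ε⌋₊ : ℝ) * ε ^ 2) * (S + 2 * (1 / e (k - 1)))
              ≤ ((⌊1 / ε⌋₊ : ℝ) * ε ^ 2) * T := by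
            refine mul_le_mul_of_nonneg_left ?_ (by positivity)
            rw [hTsplit]
            linarith
          nlinarith [hA, hB, hCC]
        calc ∑ i ∈ C2, w i
            ≤ ∑ j ∈ Finset.range (k - 2), (ε + ε ^ 2) * (1 / e (j + 1)) := hstep1
          _ ≤ ∑ j ∈ Finset.range k, (⌊1 / ε⌋₊ : ℝ) * (ε ^ 2 / e (j + 1)) := hE2
          _ = ∑ x ∈ Scopy, tildeW ε p w t e x := hScopy_sum.symm
      · have hempty : C2 = ∅ := by
          rw [hC2def]
          refine Finset.filter_eq_empty_iff.mpr fun i _ => ?_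
          intro h
          exact hk3 h.1
        rw [hempty, Finset.sum_empty]
        exact Finset.sum_nonneg fun x _ => htW0 x
    -- the large part C1
    set C1 : Finset ι := Finset.univ.filter
      (fun i => ∃ a : Fin m, (a : ℕ) < J ∧ ∃ hi : ε ^ 2 < p i, σ a = Sum.inl ⟨i, hi⟩)
      with hC1def
    have hC1sum : ∑ i ∈ C1, w i ≤ ∑ a ∈ PL, tildeW ε p w t e (σ a) := by
      set φ : Fin m → ι :=
        fun a => Sum.elim (fun l : LargeIdx ε p => (l.1 : ι)) (fun _ => i0) (σ a) with hφdef
      have hφ : ∀ (a : Fin m) (l : LargeIdx ε p), σ a = Sum.inl l → φ a = l.1 := by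
        intro a l h
        rw [hφdef]
        simp only [h, Sum.elim_inl]
      have hC1img : C1 = PL.image φ := by
        ext i
        simp only [hC1def, Finset.mem_filter, Finset.mem_univ, true_and, Finset.mem_image]
        constructor
        · rintro ⟨a, haJ, hi, hσa⟩
          refine ⟨a, ?_, hφ a ⟨i, hi⟩ hσa⟩
          rw [hPL, Finset.mem_filter]
          constructor
          · rw [hP, Finset.mem_filter]
            exact ⟨Finset.mem_univ _, haJ⟩
          · rw [hσa]
            rfl
        · rintro ⟨a, haPL, rfl⟩
          rw [hPL, Finset.mem_filter] at haPL
          obtain ⟨haP, hLft⟩ := haPL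
          rw [hP, Finset.mem_filter] at haP
          obtain ⟨l, hl⟩ := Sum.isLeft_iff.mp hLft
          have hφa : φ a = l.1 := hφ a l hl
          refine ⟨a, haP.2, ?_⟩
          rw [hφa]
          exact ⟨l.2, by rw [hl]⟩
      have hφinj : ∀ x ∈ PL, ∀ y ∈ PL, φ x = φ y → x = y := by
        intro a ha b hb h
        rw [hPL, Finset.mem_filter] at ha hb
        obtain ⟨la, hla⟩ := Sum.isLeft_iff.mp ha.2
        obtain ⟨lb, hlb⟩ := Sum.isLeft_iff.mp hb.2
        rw [hφ a la hla, hφ b lb hlb] at h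
        apply hσ.1
        rw [hla, hlb]
        exact congrArg Sum.inl (Subtype.ext h)
      rw [hC1img, Finset.sum_image hφinj]
      refine le_of_eq (Finset.sum_congr rfl fun a ha => ?_)
      rw [hPL, Finset.mem_filter] at ha
      obtain ⟨l, hl⟩ := Sum.isLeft_iff.mp ha.2
      rw [hφ a l hl, hl]
      simp [tildeW]
    -- assemble
    have hCsub : C ⊆ C1 ∪ C2 := by
      intro i hi
      rcases (hC i).mp hi with h | h
      · exact Finset.mem_union_left _
          (by rw [hC1def]; exact Finset.mem_filter.mpr ⟨Finset.mem_univ _, h⟩)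
      · exact Finset.mem_union_right _
          (by rw [hC2def]; exact Finset.mem_filter.mpr ⟨Finset.mem_univ _, h⟩)
    have hui : ∑ i ∈ C1 ∪ C2, w i ≤ ∑ i ∈ C1, w i + ∑ i ∈ C2, w i := by
      have h := Finset.sum_union_inter (s₁ := C1) (s₂ := C2) (f := w)
      have h0 : 0 ≤ ∑ i ∈ C1 ∩ C2, w i := Finset.sum_nonneg fun i _ => (hw i).le
      linarith
    calc ∑ i ∈ C, w i
        ≤ ∑ i ∈ C1 ∪ C2, w i :=
          Finset.sum_le_sum_of_subset_of_nonneg hCsub (fun i _ _ => (hw i).le)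
      _ ≤ ∑ i ∈ C1, w i + ∑ i ∈ C2, w i := hui
      _ ≤ ∑ a ∈ PL, tildeW ε p w t e (σ a) + ∑ x ∈ Scopy, tildeW ε p w t e x :=
          add_le_add hC1sum hC2sum
      _ ≤ ∑ a ∈ PL, tildeW ε p w t e (σ a) + ∑ a ∈ PR, tildeW ε p w t e (σ a) :=
          add_le_add_right hSle _
      _ = prefW ε p w t e σ J := hsplit
      _ ≤ K := hJfeas
  · -- singleton case
    push_neg at hcase
    obtain ⟨hJne, hlt⟩ := hcase
    have hJltm : J < m := lt_of_le_of_ne hJm hJne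
    have hlt' := hlt hJltm
    have hp0 : ε ^ 2 ≤ prefP ε p t σ J := by
      have h0 : (⟨0, hm0⟩ : Fin m) ∈ Finset.univ.filter (fun a : Fin m => (a : ℕ) < J) := by
        simp only [Finset.mem_filter, Finset.mem_univ, true_and]
        omega
      calc ε ^ 2 ≤ tildeP ε p t (σ ⟨0, hm0⟩) := htPl _
        _ ≤ prefP ε p t σ J :=
          Finset.single_le_sum (fun a _ => le_trans hεsq.le (htPl (σ a))) h0
    cases hx : σ ⟨J, hJltm⟩ with
    | inl l =>
      rw [hC2 hJltm hlt' l hx, Finset.sum_singleton]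
      exact hwK l.1
    | inr jc =>
      exfalso
      rw [hx] at hlt'
      simp only [tildeP, Sum.elim_inr] at hlt'
      linarith
end
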